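/- arXiv:2602.13929 — 2 statements merged into one kernel-verified Lean document; each statement's English description precedes it below -/
import Mathlib

section
/- Let g be a finite-dimensional real Lie algebra equipped with an inner product ⟨·,·⟩; for u ∈ g let ad_u : g → g denote v ↦ ⁅u,v⁆ and ad*_u its adjoint with respect to ⟨·,·⟩. Let X ∈ g satisfy ad*_X = −ad_X and let Φ(t) := exp(t·ad_X). Suppose V, W : ℝ → g are differentiable and satisfy, for all t: V'(t) = −ad*_{V(t)} V(t) + ad*_{W(t)} W(t) − ad*_{V(t)} X, W'(t) = −ad*_{V(t)} W(t) − ad*_{W(t)} V(t) − ad*_{W(t)} X, and ad*_{W(t)} W(t) = 0. Then U(t) := X + Φ(t)(V(t)) satisfies the Euler–Arnold equation U'(t) = −ad*_{U(t)} U(t) for all t, and Y(t) := Φ(t)(W(t)) satisfies the linearized Euler–Arnold equation Y'(t) + ad*_{U(t)} Y(t) + ad*_{Y(t)} U(t) = 0 for all t. -/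
open scoped RealInnerProductSpace

variable {g : Type*} [NormedAddCommGroup g] [InnerProductSpace ℝ g] [FiniteDimensional ℝ g]

/-- The adjoint operator `ad_u : v ↦ ⁅u, v⁆` of a Lie bracket `br`, as a
continuous linear map on the finite-dimensional space `g`. -/
noncomputable def adOp (br : g →ₗ[ℝ] g →ₗ[ℝ] g) (u : g) : g →L[ℝ] g :=
  LinearMap.toContinuousLinearMap (br u)

/-- The coadjoint operator `ad*_u`, the adjoint of `ad_u` with respect to the
inner product. -/
noncomputable def adStarOp (br : g →ₗ[ℝ] g →ₗ[ℝ] g) (u : g) : g →L[ℝ] g :=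
  ContinuousLinearMap.adjoint (adOp br u)

/-- The operator exponential `Φ(t) = exp(t ad_X)`. -/
noncomputable def phiExp (br : g →ₗ[ℝ] g →ₗ[ℝ] g) (X : g) (t : ℝ) : g →L[ℝ] g :=
  NormedSpace.exp (t • adOp br X)

set_option synthInstance.maxHeartbeats 1000000
set_option maxHeartbeats 1000000

section auxST15
variable (br : g →ₗ[ℝ] g →ₗ[ℝ] g) (X : g)

/-- The bracket as a continuous bilinear map. -/
noncomputable def brCLM : g →L[ℝ] g →L[ℝ] g :=
  LinearMap.toContinuousLinearMap
    { toFun := fun x => LinearMap.toContinuousLinearMap (br x)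
      map_add' := by intro x y; ext v; simp
      map_smul' := by intro c x; ext v; simp }

lemma brCLM_apply (u v : g) : brCLM br u v = br u v := rfl

lemma phi_X_eq (hself : br X X = 0) (t : ℝ) : phiExp br X t X = X := by
  have hA : adOp br X X = 0 := hself
  have hsum : Summable fun n : ℕ => ((Nat.factorial n : ℝ))⁻¹ • (t • adOp br X) ^ n :=
    NormedSpace.expSeries_summable' (𝕂 := ℝ) _
  have : phiExp br X t = ∑' n : ℕ, ((Nat.factorial n : ℝ))⁻¹ • (t • adOp br X) ^ n := by
    rw [phiExp, NormedSpace.exp_eq_tsum ℝ]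
  rw [this]
  have happ : (∑' n : ℕ, ((Nat.factorial n : ℝ))⁻¹ • (t • adOp br X) ^ n) X
      = ∑' n : ℕ, (((Nat.factorial n : ℝ))⁻¹ • (t • adOp br X) ^ n) X := by
    exact (ContinuousLinearMap.apply ℝ g X).map_tsum hsum
  rw [happ]
  have hterm : ∀ n : ℕ, (((Nat.factorial n : ℝ))⁻¹ • (t • adOp br X) ^ n) X
      = if n = 0 then X else 0 := by
    intro n
    cases n with
    | zero => simp
    | succ m =>
      simp only [Nat.succ_ne_zero, if_false]
      rw [pow_succ, ContinuousLinearMap.smul_apply, ContinuousLinearMap.mul_apply]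
      simp [hA]
      exact Or.inr (Function.iterate_fixed (by simp) m)
  rw [tsum_congr hterm, tsum_eq_single 0 (by intro n h; simp [h])]
  simp

/-- Derivation property of `ad_X`, from antisymmetry and the Jacobi identity. -/
lemma ad_derivation (hanti : ∀ x y : g, br x y = -br y x)
    (hjacobi : ∀ x y z : g, br (br x y) z + br (br y z) x + br (br z x) y = 0)
    (x y : g) :
    adOp br X (br x y) = br (adOp br X x) y + br x (adOp br X y) := by
  have h := hjacobi X x y
  show br X (br x y) = br (br X x) y + br x (br X y)
  have h1 : br (br x y) X = -br X (br x y) := hanti _ _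
  have h2 : br (br y X) x = br x (br X y) := by
    rw [hanti y X, map_neg, LinearMap.neg_apply, hanti (br X y) x, neg_neg]
  rw [h1, h2] at h
  rw [eq_comm, ← sub_eq_zero]
  rw [← h]
  abel

lemma phi_deriv (w : ℝ → g) (w' : g) (t : ℝ) (hw : HasDerivAt w w' t) :
    HasDerivAt (fun s => phiExp br X s (w s))
      (adOp br X (phiExp br X t (w t)) + phiExp br X t w') t := by
  have h1 : HasDerivAt (fun s : ℝ => phiExp br X s)
      (adOp br X * phiExp br X t) t := by
    simpa [phiExp] using hasDerivAt_exp_smul_const' (𝕂 := ℝ) (adOp br X) t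
  simpa using h1.clm_apply hw

lemma phi_neg_deriv (w : ℝ → g) (w' : g) (t : ℝ) (hw : HasDerivAt w w' t) :
    HasDerivAt (fun s => phiExp br X (-s) (w s))
      (-(adOp br X (phiExp br X (-t) (w t))) + phiExp br X (-t) w') t := by
  have key : ∀ s : ℝ, phiExp br X (-s) = NormedSpace.exp (s • (-(adOp br X))) := by
    intro s; rw [phiExp, smul_neg, ← neg_smul]
  have h1 : HasDerivAt (fun s : ℝ => phiExp br X (-s))
      ((-(adOp br X)) * phiExp br X (-t)) t := by
    simp only [key]
    exact hasDerivAt_exp_smul_const' (𝕂 := ℝ) (-(adOp br X)) t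
  simpa using h1.clm_apply hw

lemma phi_mul (s t : ℝ) : phiExp br X s * phiExp br X t = phiExp br X (s + t) := by
  rw [phiExp, phiExp, phiExp, add_smul]
  exact (NormedSpace.exp_add_of_commute_of_mem_ball (𝕂 := ℝ)
    (((Commute.refl (adOp br X)).smul_left s).smul_right t)
    ((NormedSpace.expSeries_radius_eq_top ℝ (g →L[ℝ] g)).symm ▸ edist_lt_top _ _)
    ((NormedSpace.expSeries_radius_eq_top ℝ (g →L[ℝ] g)).symm ▸ edist_lt_top _ _)).symm

lemma phi_cancel (t : ℝ) (w : g) : phiExp br X t (phiExp br X (-t) w) = w := by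
  rw [← ContinuousLinearMap.mul_apply, phi_mul, add_neg_cancel]
  show NormedSpace.exp ((0:ℝ) • adOp br X) w = w
  rw [zero_smul, NormedSpace.exp_zero, ContinuousLinearMap.one_apply]

lemma phi_cancel' (t : ℝ) (w : g) : phiExp br X (-t) (phiExp br X t w) = w := by
  have := phi_cancel br X (-t) w
  rwa [neg_neg] at this

lemma ad_comm_phi (t : ℝ) (w : g) :
    adOp br X (phiExp br X t w) = phiExp br X t (adOp br X w) := by
  have h : Commute (adOp br X) (phiExp br X t) :=
    ((Commute.refl (adOp br X)).smul_right t).exp_right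
  calc adOp br X (phiExp br X t w) = (adOp br X * phiExp br X t) w := rfl
    _ = (phiExp br X t * adOp br X) w := by rw [h.eq]
    _ = _ := rfl

/-- `Φ(t)` is a Lie algebra automorphism. -/
lemma phi_automorphism (hanti : ∀ x y : g, br x y = -br y x)
    (hjacobi : ∀ x y z : g, br (br x y) z + br (br y z) x + br (br z x) y = 0)
    (t : ℝ) (u v : g) :
    br (phiExp br X t u) (phiExp br X t v) = phiExp br X t (br u v) := by
  set A := adOp br X with hA
  set Φ := phiExp br X with hΦ
  set f : ℝ → g := fun s => Φ (-s) (brCLM br (Φ s u) (Φ s v)) with hf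
  have hderiv : ∀ s : ℝ, HasDerivAt f 0 s := by
    intro s
    have hu : HasDerivAt (fun s => Φ s u) (A (Φ s u)) s := by
      simpa using phi_deriv br X (fun _ => u) 0 s (hasDerivAt_const s u)
    have hv : HasDerivAt (fun s => Φ s v) (A (Φ s v)) s := by
      simpa using phi_deriv br X (fun _ => v) 0 s (hasDerivAt_const s v)
    have hc : HasDerivAt (fun s => brCLM br (Φ s u)) (brCLM br (A (Φ s u))) s :=
      (brCLM br).hasFDerivAt.comp_hasDerivAt s hu
    have hw : HasDerivAt (fun s => brCLM br (Φ s u) (Φ s v))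
        (brCLM br (A (Φ s u)) (Φ s v) + brCLM br (Φ s u) (A (Φ s v))) s :=
      hc.clm_apply hv
    have h0 := phi_neg_deriv br X _ _ s hw
    have hzero : -(A (Φ (-s) (brCLM br (Φ s u) (Φ s v))))
        + Φ (-s) (brCLM br (A (Φ s u)) (Φ s v) + brCLM br (Φ s u) (A (Φ s v))) = 0 := by
      rw [ad_comm_phi]
      rw [← map_neg (Φ (-s)), ← map_add (Φ (-s))]
      have : -(A (brCLM br (Φ s u) (Φ s v)))
          + (brCLM br (A (Φ s u)) (Φ s v) + brCLM br (Φ s u) (A (Φ s v))) = 0 := by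
        have := ad_derivation br X hanti hjacobi (Φ s u) (Φ s v)
        simp only [brCLM_apply]
        rw [this]; abel
      rw [this, map_zero]
    rw [hzero] at h0
    exact h0
  have hconst : f t = f 0 := by
    apply is_const_of_deriv_eq_zero (fun s => (hderiv s).differentiableAt)
    intro s; exact (hderiv s).deriv
  have hf0 : f 0 = br u v := by
    have hΦ0 : Φ 0 = 1 := by
      show NormedSpace.exp ((0:ℝ) • A) = 1
      rw [zero_smul, NormedSpace.exp_zero]
    simp [hf, hΦ0, brCLM_apply]
  have := hconst.trans hf0
  calc br (Φ t u) (Φ t v) = brCLM br (Φ t u) (Φ t v) := rfl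
    _ = Φ t (Φ (-t) (brCLM br (Φ t u) (Φ t v))) := (phi_cancel br X t _).symm
    _ = Φ t (f t) := rfl
    _ = Φ t (br u v) := by rw [this]

lemma phi_adjoint (hX : adStarOp br X = -adOp br X) (t : ℝ) :
    ContinuousLinearMap.adjoint (phiExp br X t) = phiExp br X (-t) := by
  rw [← ContinuousLinearMap.star_eq_adjoint, phiExp, NormedSpace.star_exp]
  congr 1
  rw [star_smul, star_trivial, ContinuousLinearMap.star_eq_adjoint]
  show t • adStarOp br X = _
  rw [hX, smul_neg, neg_smul]

lemma adOp_phi (hanti : ∀ x y : g, br x y = -br y x)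
    (hjacobi : ∀ x y z : g, br (br x y) z + br (br y z) x + br (br z x) y = 0)
    (t : ℝ) (u : g) :
    adOp br (phiExp br X t u) =
      (phiExp br X t ∘L adOp br u) ∘L phiExp br X (-t) := by
  ext w
  show br (phiExp br X t u) w = phiExp br X t (br u (phiExp br X (-t) w))
  conv_lhs => rw [← phi_cancel br X t w]
  rw [phi_automorphism br X hanti hjacobi]

/-- Conjugation of the coadjoint operator by the (orthogonal) flow `Φ(t)`. -/
lemma adStar_phi (hanti : ∀ x y : g, br x y = -br y x)
    (hjacobi : ∀ x y z : g, br (br x y) z + br (br y z) x + br (br z x) y = 0)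
    (hX : adStarOp br X = -adOp br X) (t : ℝ) (u : g) (w : g) :
    adStarOp br (phiExp br X t u) w =
      phiExp br X t (adStarOp br u (phiExp br X (-t) w)) := by
  rw [adStarOp, adOp_phi br X hanti hjacobi, ContinuousLinearMap.adjoint_comp,
    ContinuousLinearMap.adjoint_comp, phi_adjoint br X hX, phi_adjoint br X hX, neg_neg]
  rfl

lemma adStar_add (a b : g) (w : g) :
    adStarOp br (a + b) w = adStarOp br a w + adStarOp br b w := by
  have h : adOp br (a + b) = adOp br a + adOp br b := by
    ext v; show br (a + b) v = br a v + br b v; rw [map_add]; rfl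
  rw [adStarOp, h, map_add]; rfl

end auxST15

/-- Theorem 5.5 in the finite-dimensional real Lie algebra
setting (the Lie algebra is a finite-dimensional real inner product space `g`
with an antisymmetric bilinear bracket `br` satisfying the Jacobi identity).
If `Z = V + iW` solves the Euler–Arnold equation with generalized Coriolis
force (written out in real and imaginary parts) and `ad*_W W = 0`, then
`U(t) = X + Φ(t)(V(t))` solves the Euler–Arnold equation `U' = -ad*_U U` and
`Y(t) = Φ(t)(W(t))` solves the linearized equation
`Y' + ad*_U Y + ad*_Y U = 0`. -/
theorem statement15 (br : g →ₗ[ℝ] g →ₗ[ℝ] g)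
    (hanti : ∀ x y : g, br x y = -br y x)
    (hjacobi : ∀ x y z : g, br (br x y) z + br (br y z) x + br (br z x) y = 0)
    (X : g) (hX : adStarOp br X = -adOp br X)
    (V W : ℝ → g)
    (hV : ∀ t : ℝ, HasDerivAt V
      (-(adStarOp br (V t) (V t)) + adStarOp br (W t) (W t) - adStarOp br (V t) X) t)
    (hW : ∀ t : ℝ, HasDerivAt W
      (-(adStarOp br (V t) (W t)) - adStarOp br (W t) (V t) - adStarOp br (W t) X) t)
    (hWW : ∀ t : ℝ, adStarOp br (W t) (W t) = 0) :
    (∀ t : ℝ,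
      HasDerivAt (fun s : ℝ => X + phiExp br X s (V s))
        (-(adStarOp br (X + phiExp br X t (V t)) (X + phiExp br X t (V t)))) t) ∧
    (∀ t : ℝ,
      HasDerivAt (fun s : ℝ => phiExp br X s (W s))
        (-(adStarOp br (X + phiExp br X t (V t)) (phiExp br X t (W t)))
          - adStarOp br (phiExp br X t (W t)) (X + phiExp br X t (V t))) t) := by
  have hself : br X X = 0 := by
    have h := hanti X X
    have h2 : (2:ℝ) • br X X = 0 := by
      rw [two_smul]
      nth_rewrite 2 [h]
      simp
    have := smul_eq_zero.mp h2
    simpa using this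
  have hXw : ∀ w : g, adStarOp br X w = -(adOp br X w) := by
    intro w; rw [hX]; rfl
  have hXX : adStarOp br X X = 0 := by
    rw [hXw]
    show -(br X X) = 0
    rw [hself, neg_zero]
  have hconj : ∀ (t : ℝ) (u w : g), adStarOp br (phiExp br X t u) w =
      phiExp br X t (adStarOp br u (phiExp br X (-t) w)) :=
    fun t u w => adStar_phi br X hanti hjacobi hX t u w
  constructor
  · intro t
    have hd := (phi_deriv br X V _ t (hV t)).const_add X
    have key : -(adStarOp br (X + phiExp br X t (V t)) (X + phiExp br X t (V t)))
        = adOp br X (phiExp br X t (V t)) +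
          phiExp br X t (-(adStarOp br (V t) (V t)) + adStarOp br (W t) (W t)
            - adStarOp br (V t) X) := by
      rw [hWW t]
      rw [adStar_add]
      rw [map_add (adStarOp br X), map_add (adStarOp br (phiExp br X t (V t)))]
      rw [hXX, hXw]
      rw [hconj t (V t) X, hconj t (V t) (phiExp br X t (V t))]
      rw [phi_X_eq br X hself, phi_cancel' br X t]
      simp only [map_sub, map_add, map_neg, map_zero, ContinuousLinearMap.neg_apply]
      abel
    rw [key]
    exact hd
  · intro t
    have hd := phi_deriv br X W _ t (hW t)
    have key : -(adStarOp br (X + phiExp br X t (V t)) (phiExp br X t (W t)))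
          - adStarOp br (phiExp br X t (W t)) (X + phiExp br X t (V t))
        = adOp br X (phiExp br X t (W t)) +
          phiExp br X t (-(adStarOp br (V t) (W t)) - adStarOp br (W t) (V t)
            - adStarOp br (W t) X) := by
      rw [adStar_add]
      rw [map_add (adStarOp br (phiExp br X t (W t)))]
      rw [hXw]
      rw [hconj t (V t) (phiExp br X t (W t)), hconj t (W t) X,
        hconj t (W t) (phiExp br X t (V t))]
      rw [phi_X_eq br X hself, phi_cancel' br X t, phi_cancel' br X t]
      simp only [map_sub, map_add, map_neg, map_zero, ContinuousLinearMap.neg_apply]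
      abel
    rw [key]
    exact hd
end

section
/- Let g be a finite-dimensional real Lie algebra equipped with an inner product ⟨·,·⟩; for u ∈ g let ad_u : g → g denote v ↦ ⁅u,v⁆ and ad*_u its adjoint with respect to ⟨·,·⟩. Let X ∈ g satisfy ad*_X = −ad_X and let Φ(t) := exp(t·ad_X). Suppose x₁ : ℝ → g is differentiable and satisfies x₁'(t) + ad*_{x₁(t)} X = 0 and ad*_{x₁(t)} x₁(t) = 0 for all t. Then U(t) := X + Φ(t)(x₁(t)) satisfies the Euler–Arnold equation U'(t) = −ad*_{U(t)} U(t) for all t ∈ ℝ. -/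
open scoped RealInnerProductSpace

set_option synthInstance.maxHeartbeats 1000000
set_option maxHeartbeats 1000000

variable {g : Type*} [NormedAddCommGroup g] [InnerProductSpace ℝ g] [FiniteDimensional ℝ g]

lemma adOp_apply (br : g →ₗ[ℝ] g →ₗ[ℝ] g) (u v : g) : adOp br u v = br u v := by
  simp [adOp]

/-- `u ↦ adOp br u` as a continuous linear map. -/
noncomputable def adL (br : g →ₗ[ℝ] g →ₗ[ℝ] g) : g →L[ℝ] (g →L[ℝ] g) :=
  LinearMap.toContinuousLinearMap
    ((LinearMap.toContinuousLinearMap :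
        (g →ₗ[ℝ] g) ≃ₗ[ℝ] (g →L[ℝ] g)).toLinearMap ∘ₗ br)

lemma adL_apply (br : g →ₗ[ℝ] g →ₗ[ℝ] g) (u : g) : adL br u = adOp br u := by
  simp [adL, adOp]

lemma phiExp_mul (br : g →ₗ[ℝ] g →ₗ[ℝ] g) (X : g) (s t : ℝ) :
    phiExp br X s * phiExp br X t = phiExp br X (s + t) := by
  letI : NormedAlgebra ℚ (g →L[ℝ] g) := NormedAlgebra.restrictScalars ℚ ℝ _
  rw [phiExp, phiExp, phiExp, add_smul,
    NormedSpace.exp_add_of_commute (((Commute.refl (adOp br X)).smul_left s).smul_right t)]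

lemma phiExp_zero (br : g →ₗ[ℝ] g →ₗ[ℝ] g) (X : g) : phiExp br X 0 = 1 := by
  rw [phiExp, zero_smul, NormedSpace.exp_zero]

lemma phiExp_inv_apply (br : g →ₗ[ℝ] g →ₗ[ℝ] g) (X : g) (t : ℝ) (y : g) :
    phiExp br X t (phiExp br X (-t) y) = y := by
  have : phiExp br X t (phiExp br X (-t) y) = (phiExp br X t * phiExp br X (-t)) y := rfl
  rw [this, phiExp_mul, add_neg_cancel, phiExp_zero, ContinuousLinearMap.one_apply]

lemma phiExp_inv_apply' (br : g →ₗ[ℝ] g →ₗ[ℝ] g) (X : g) (t : ℝ) (y : g) :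
    phiExp br X (-t) (phiExp br X t y) = y := by
  have := phiExp_inv_apply br X (-t) y
  rwa [neg_neg] at this

lemma phiExp_comm_adOp (br : g →ₗ[ℝ] g →ₗ[ℝ] g) (X : g) (t : ℝ) (y : g) :
    phiExp br X t (adOp br X y) = adOp br X (phiExp br X t y) := by
  have h : phiExp br X t * adOp br X = adOp br X * phiExp br X t := by
    rw [phiExp]
    exact (((Commute.refl (adOp br X)).smul_right t).exp_right).eq.symm
  calc phiExp br X t (adOp br X y) = (phiExp br X t * adOp br X) y := rfl
    _ = (adOp br X * phiExp br X t) y := by rw [h]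
    _ = adOp br X (phiExp br X t y) := rfl

lemma phiExp_adjoint (br : g →ₗ[ℝ] g →ₗ[ℝ] g) (X : g)
    (hX : adStarOp br X = -adOp br X) (t : ℝ) :
    ContinuousLinearMap.adjoint (phiExp br X t) = phiExp br X (-t) := by
  rw [← ContinuousLinearMap.star_eq_adjoint, phiExp, NormedSpace.star_exp]
  congr 1
  rw [star_smul, star_trivial, ContinuousLinearMap.star_eq_adjoint]
  have : ContinuousLinearMap.adjoint (adOp br X) = adStarOp br X := rfl
  rw [this, hX, neg_smul, smul_neg]

lemma hasDerivAt_phiExp (br : g →ₗ[ℝ] g →ₗ[ℝ] g) (X : g) (t : ℝ) :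
    HasDerivAt (fun s : ℝ => phiExp br X s) (phiExp br X t * adOp br X) t :=
  hasDerivAt_exp_smul_const (adOp br X) t

lemma hasDerivAt_phiExp_neg (br : g →ₗ[ℝ] g →ₗ[ℝ] g) (X : g) (t : ℝ) :
    HasDerivAt (fun s : ℝ => phiExp br X (-s)) (-(phiExp br X (-t) * adOp br X)) t := by
  have h := (hasDerivAt_phiExp br X (-t)).scomp t (hasDerivAt_neg t)
  simpa [Function.comp_def] using h

/-- `ad_X` is a derivation. -/
lemma derivation (br : g →ₗ[ℝ] g →ₗ[ℝ] g)
    (hanti : ∀ x y : g, br x y = -br y x)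
    (hjacobi : ∀ x y z : g, br (br x y) z + br (br y z) x + br (br z x) y = 0)
    (X y z : g) :
    br X (br y z) = br (br X y) z + br y (br X z) := by
  have hj := hjacobi X y z
  have h1 : br (br y z) X = -br X (br y z) := hanti _ _
  have h2 : br (br z X) y = br y (br X z) := by
    rw [hanti z X, map_neg, LinearMap.neg_apply, hanti (br X z) y, neg_neg]
  rw [h1, h2] at hj
  have : br X (br y z) - (br (br X y) z + br y (br X z)) =
      -(br (br X y) z + -br X (br y z) + br y (br X z)) := by abel
  rw [hj, neg_zero] at this
  exact (sub_eq_zero.mp this)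

/-- `Φ(t)` is a Lie algebra automorphism. -/
lemma phiExp_bracket (br : g →ₗ[ℝ] g →ₗ[ℝ] g)
    (hanti : ∀ x y : g, br x y = -br y x)
    (hjacobi : ∀ x y z : g, br (br x y) z + br (br y z) x + br (br z x) y = 0)
    (X : g) (t : ℝ) (v w : g) :
    br (phiExp br X t v) (phiExp br X t w) = phiExp br X t (br v w) := by
  set f : ℝ → g := fun s =>
    phiExp br X (-s) (adOp br (phiExp br X s v) (phiExp br X s w)) with hf
  have hderiv : ∀ s : ℝ, HasDerivAt f 0 s := by
    intro s
    have hv : HasDerivAt (fun u : ℝ => phiExp br X u v) (phiExp br X s (adOp br X v)) s := by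
      have := (hasDerivAt_phiExp br X s).clm_apply (hasDerivAt_const s v)
      simpa using this
    have hw : HasDerivAt (fun u : ℝ => phiExp br X u w) (phiExp br X s (adOp br X w)) s := by
      have := (hasDerivAt_phiExp br X s).clm_apply (hasDerivAt_const s w)
      simpa using this
    have hva : HasDerivAt (fun u : ℝ => adL br (phiExp br X u v))
        (adL br (phiExp br X s (adOp br X v))) s :=
      (adL br).hasFDerivAt.comp_hasDerivAt s hv
    have hinner : HasDerivAt (fun u : ℝ => adOp br (phiExp br X u v) (phiExp br X u w))
        (adL br (phiExp br X s (adOp br X v)) (phiExp br X s w)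
          + adOp br (phiExp br X s v) (phiExp br X s (adOp br X w))) s := by
      have := hva.clm_apply hw
      simpa [adL_apply] using this
    have houter : HasDerivAt (fun u : ℝ => phiExp br X (-u)) (-(phiExp br X (-s) * adOp br X)) s :=
      hasDerivAt_phiExp_neg br X s
    have := houter.clm_apply hinner
    have key : (-(phiExp br X (-s) * adOp br X))
          (adOp br (phiExp br X s v) (phiExp br X s w))
        + phiExp br X (-s)
          (adL br (phiExp br X s (adOp br X v)) (phiExp br X s w)
            + adOp br (phiExp br X s v) (phiExp br X s (adOp br X w))) = 0 := by
      set a := phiExp br X s v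
      set b := phiExp br X s w
      have hca : phiExp br X s (adOp br X v) = adOp br X a := phiExp_comm_adOp br X s v
      have hcb : phiExp br X s (adOp br X w) = adOp br X b := phiExp_comm_adOp br X s w
      rw [hca, hcb, adL_apply]
      have hder : adOp br X (adOp br a b) = adOp br (adOp br X a) b + adOp br a (adOp br X b) := by
        simp only [adOp_apply]
        exact derivation br hanti hjacobi X a b
      simp only [ContinuousLinearMap.neg_apply, ContinuousLinearMap.mul_apply, ← hder]
      abel
    rw [key] at this
    exact this
  have hconst : f t = f 0 := by
    apply is_const_of_deriv_eq_zero (fun s => (hderiv s).differentiableAt)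
    intro s; exact (hderiv s).deriv
  have hf0 : f 0 = br v w := by
    simp [hf, phiExp_zero, adOp_apply]
  have hft : phiExp br X (-t) (adOp br (phiExp br X t v) (phiExp br X t w)) = br v w := by
    rw [← hf0, ← hconst]
  have := congrArg (phiExp br X t) hft
  rw [phiExp_inv_apply br X t] at this
  rw [← this, adOp_apply]

lemma phiExp_fix (br : g →ₗ[ℝ] g →ₗ[ℝ] g)
    (hanti : ∀ x y : g, br x y = -br y x) (X : g) (t : ℝ) :
    phiExp br X t X = X := by
  have hXX : br X X = 0 := by
    have h := hanti X X
    have : br X X + br X X = 0 := by nth_rewrite 1 [h]; exact neg_add_cancel _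
    have h2 : (2 : ℝ) • br X X = 0 := by rw [two_smul]; exact this
    simpa using smul_eq_zero.mp h2 |>.resolve_left (by norm_num)
  have hderiv : ∀ s : ℝ, HasDerivAt (fun u : ℝ => phiExp br X u X) 0 s := by
    intro s
    have := (hasDerivAt_phiExp br X s).clm_apply (hasDerivAt_const s X)
    simp only [map_zero, add_zero, ContinuousLinearMap.mul_apply] at this
    have hz : adOp br X X = 0 := by rw [adOp_apply, hXX]
    rw [hz, map_zero] at this
    exact this
  have hconst : phiExp br X t X = phiExp br X 0 X := by
    exact is_const_of_deriv_eq_zero (fun s => (hderiv s).differentiableAt)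
      (fun s => (hderiv s).deriv) t 0
  rw [hconst, phiExp_zero, ContinuousLinearMap.one_apply]

/-- Conjugation of `ad*` by the orthogonal automorphism `Φ(t)`. -/
lemma adStarOp_phiExp (br : g →ₗ[ℝ] g →ₗ[ℝ] g)
    (hanti : ∀ x y : g, br x y = -br y x)
    (hjacobi : ∀ x y z : g, br (br x y) z + br (br y z) x + br (br z x) y = 0)
    (X : g) (hX : adStarOp br X = -adOp br X) (t : ℝ) (v w : g) :
    adStarOp br (phiExp br X t v) (phiExp br X t w) = phiExp br X t (adStarOp br v w) := by
  apply ext_inner_right ℝ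
  intro z
  rw [adStarOp, ContinuousLinearMap.adjoint_inner_left]
  have hz : z = phiExp br X t (phiExp br X (-t) z) := (phiExp_inv_apply br X t z).symm
  set c := phiExp br X (-t) z with hc
  calc ⟪phiExp br X t w, adOp br (phiExp br X t v) z⟫
      = ⟪phiExp br X t w, phiExp br X t (br v c)⟫ := by
        rw [adOp_apply]
        conv_lhs => rw [hz]
        rw [phiExp_bracket br hanti hjacobi X t v c]
    _ = ⟪w, phiExp br X (-t) (phiExp br X t (br v c))⟫ := by
        rw [← ContinuousLinearMap.adjoint_inner_left (phiExp br X (-t)),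
          phiExp_adjoint br X hX, neg_neg]
    _ = ⟪w, adOp br v c⟫ := by rw [phiExp_inv_apply' br X t, adOp_apply]
    _ = ⟪adStarOp br v w, c⟫ := by
        rw [adStarOp, ContinuousLinearMap.adjoint_inner_left]
    _ = ⟪phiExp br X t (adStarOp br v w), z⟫ := by
        rw [hc, ← ContinuousLinearMap.adjoint_inner_left (phiExp br X (-t)),
          phiExp_adjoint br X hX, neg_neg]

lemma adStarOp_add_left (br : g →ₗ[ℝ] g →ₗ[ℝ] g) (u v : g) :
    adStarOp br (u + v) = adStarOp br u + adStarOp br v := by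
  have : adOp br (u + v) = adOp br u + adOp br v := by
    ext w; simp [adOp_apply]
  rw [adStarOp, this, map_add]; rfl

/-- The truncated perturbative hierarchy (system (5.12)) in the
finite-dimensional real Lie algebra setting (the Lie algebra is a
finite-dimensional real inner product space `g` with an antisymmetric bilinear
bracket `br` satisfying the Jacobi identity). If `ad*_X = -ad_X`,
`x₁' + ad*_{x₁} X = 0` and `ad*_{x₁} x₁ = 0`, then `U(t) = X + Φ(t)(x₁(t))`
solves the Euler–Arnold equation `U' = -ad*_U U`. -/
theorem statement18 (br : g →ₗ[ℝ] g →ₗ[ℝ] g)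
    (hanti : ∀ x y : g, br x y = -br y x)
    (hjacobi : ∀ x y z : g, br (br x y) z + br (br y z) x + br (br z x) y = 0)
    (X : g) (hX : adStarOp br X = -adOp br X)
    (x₁ : ℝ → g)
    (h1 : ∀ t : ℝ, HasDerivAt x₁ (-(adStarOp br (x₁ t) X)) t)
    (h2 : ∀ t : ℝ, adStarOp br (x₁ t) (x₁ t) = 0) :
    ∀ t : ℝ,
      HasDerivAt (fun s : ℝ => X + phiExp br X s (x₁ s))
        (-(adStarOp br (X + phiExp br X t (x₁ t)) (X + phiExp br X t (x₁ t)))) t := by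
  intro t
  have hXX : br X X = 0 := by
    have h := hanti X X
    have : br X X + br X X = 0 := by nth_rewrite 1 [h]; exact neg_add_cancel _
    have h2' : (2 : ℝ) • br X X = 0 := by rw [two_smul]; exact this
    simpa using smul_eq_zero.mp h2' |>.resolve_left (by norm_num)
  set y := phiExp br X t (x₁ t) with hy
  -- compute the right-hand side
  have hRHS : -(adStarOp br (X + y) (X + y))
      = adOp br X y - phiExp br X t (adStarOp br (x₁ t) X) := by
    rw [adStarOp_add_left, ContinuousLinearMap.add_apply, map_add, map_add]
    have e1 : adStarOp br X X = 0 := by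
      rw [hX, ContinuousLinearMap.neg_apply, adOp_apply, hXX, neg_zero]
    have e2 : adStarOp br X y = -(adOp br X y) := by
      rw [hX, ContinuousLinearMap.neg_apply]
    have e3 : adStarOp br y X = phiExp br X t (adStarOp br (x₁ t) X) := by
      have h3 := adStarOp_phiExp br hanti hjacobi X hX t (x₁ t) X
      rw [phiExp_fix br hanti X t] at h3
      rw [hy]; exact h3
    have e4 : adStarOp br y y = 0 := by
      rw [hy, adStarOp_phiExp br hanti hjacobi X hX t, h2, map_zero]
    rw [e1, e2, e3, e4]
    abel
  -- compute the derivative of the left-hand side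
  have hder : HasDerivAt (fun s : ℝ => X + phiExp br X s (x₁ s))
      (adOp br X y - phiExp br X t (adStarOp br (x₁ t) X)) t := by
    have h := ((hasDerivAt_phiExp br X t).clm_apply (h1 t)).const_add X
    have heq : (phiExp br X t * adOp br X) (x₁ t) + phiExp br X t (-(adStarOp br (x₁ t) X))
        = adOp br X y - phiExp br X t (adStarOp br (x₁ t) X) := by
      rw [ContinuousLinearMap.mul_apply, phiExp_comm_adOp br X t, map_neg, ← hy]
      abel
    rwa [heq] at h
  rw [hRHS]
  exact hder
end
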